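/- Let A ∈ ℝ^{K×J} and b^i ∈ ℝ^K for i in a finite nonempty set N, and for each nonempty S ⊆ N define X(S) = {x ∈ ℝ^J : x ≥ 0, A x ≤ Σ_{i∈S} b^i}. If X({i}) is nonempty for every i ∈ N, then X(S) is nonempty for every nonempty coalition S ⊆ N; if in addition X({i}) is bounded for every i ∈ N, then X(S) is bounded for every nonempty coalition S ⊆ N. -/

import Mathlib

open Finset

/-- The design space `X(S)` of a coalition `S`:
nonnegative vectors `x` with `A x ≤ ∑_{i ∈ S} bᵢ`. -/
def designSpace {K J N : Type*} [Fintype J] (A : K → J → ℝ) (b : N → K → ℝ)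
    (S : Finset N) : Set (J → ℝ) :=
  {x | (∀ j, 0 ≤ x j) ∧ ∀ k, (∑ j, A k j * x j) ≤ ∑ i ∈ S, b i k}

/-- If the "recession cone" `{c ≥ 0 : A c ≤ 0}` is trivial, then any set
`{x ≥ 0 : A x ≤ d}` is bounded. -/
lemma aux_bounded_of_rec {K J : Type*} [Fintype J] [Fintype K]
    (A : K → J → ℝ) (d : K → ℝ)
    (hrec : ∀ c : J → ℝ, (∀ j, 0 ≤ c j) → (∀ k, (∑ j, A k j * c j) ≤ 0) → c = 0) :
    Bornology.IsBounded {x : J → ℝ | (∀ j, 0 ≤ x j) ∧ ∀ k, (∑ j, A k j * x j) ≤ d k} := by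
  classical
  by_cases hJ : IsEmpty J
  · have : {x : J → ℝ | (∀ j, 0 ≤ x j) ∧ ∀ k, (∑ j, A k j * x j) ≤ d k} ⊆ {0} := by
      intro x _
      have : x = 0 := funext fun j => hJ.elim j
      simp [this]
    exact (Bornology.isBounded_singleton (x := (0 : J → ℝ))).subset this
  · have hJne : Nonempty J := not_isEmpty_iff.mp hJ
    set g : (J → ℝ) → ℝ := fun c => ∑ k, max (∑ j, A k j * c j) 0 with hg_def
    have hg_cont : Continuous g := by
      apply continuous_finset_sum
      intro k _
      exact (continuous_finset_sum _ fun j _ =>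
        (continuous_const.mul (continuous_apply j))).max continuous_const
    have hΔne : (stdSimplex ℝ J).Nonempty := by
      refine ⟨fun _ => (Fintype.card J : ℝ)⁻¹, fun j => by positivity, ?_⟩
      simp only [Finset.sum_const, Finset.card_univ, nsmul_eq_mul]
      rw [mul_inv_cancel₀]
      exact_mod_cast Fintype.card_ne_zero
    obtain ⟨c, hcΔ, hmin⟩ := (isCompact_stdSimplex ℝ J).exists_isMinOn hΔne hg_cont.continuousOn
    set ε := g c with hε_def
    have hε_pos : 0 < ε := by
      have hcne : c ≠ 0 := by
        intro h
        have := hcΔ.2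
        rw [h] at this
        simp at this
      have : ¬ ∀ k, (∑ j, A k j * c j) ≤ 0 := fun h => hcne (hrec c hcΔ.1 h)
      push_neg at this
      obtain ⟨k, hk⟩ := this
      have hterm : (0:ℝ) < max (∑ j, A k j * c j) 0 := lt_max_of_lt_left hk
      have : max (∑ j, A k j * c j) 0 ≤ g c :=
        Finset.single_le_sum (f := fun k => max (∑ j, A k j * c j) 0)
          (fun k _ => le_max_right _ _) (Finset.mem_univ k)
      linarith
    set D : ℝ := ∑ k, max (d k) 0 with hD_def
    have hD_nonneg : 0 ≤ D := Finset.sum_nonneg fun k _ => le_max_right _ _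
    have hC_nonneg : 0 ≤ D / ε := div_nonneg hD_nonneg hε_pos.le
    rw [Metric.isBounded_iff_subset_closedBall 0]
    refine ⟨D / ε, fun x hx => ?_⟩
    simp only [Metric.mem_closedBall, dist_zero_right]
    rw [pi_norm_le_iff_of_nonneg hC_nonneg]
    intro j
    obtain ⟨hx0, hxA⟩ := hx
    rw [Real.norm_of_nonneg (hx0 j)]
    set s : ℝ := ∑ j, x j with hs_def
    have hs_nonneg : 0 ≤ s := Finset.sum_nonneg fun j _ => hx0 j
    have hxjs : x j ≤ s := Finset.single_le_sum (fun j _ => hx0 j) (Finset.mem_univ j)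
    rcases eq_or_lt_of_le hs_nonneg with h0 | hs_pos
    · linarith
    · -- normalize x to the simplex
      have hmem : (s⁻¹ • x) ∈ stdSimplex ℝ J := by
        constructor
        · intro j; exact mul_nonneg (inv_nonneg.mpr hs_nonneg) (hx0 j)
        · simp only [Pi.smul_apply, smul_eq_mul, ← Finset.mul_sum]
          exact inv_mul_cancel₀ hs_pos.ne'
      have hgle : ε ≤ g (s⁻¹ • x) := hmin hmem
      have hghom : g (s⁻¹ • x) = s⁻¹ * g x := by
        simp only [hg_def, Finset.mul_sum]
        refine Finset.sum_congr rfl fun k _ => ?_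
        have : (∑ j, A k j * (s⁻¹ • x) j) = s⁻¹ * ∑ j, A k j * x j := by
          rw [Finset.mul_sum]
          refine Finset.sum_congr rfl fun j _ => ?_
          simp [Pi.smul_apply, smul_eq_mul]; ring
        rw [this, mul_max_of_nonneg _ _ (inv_nonneg.mpr hs_nonneg), mul_zero]
      have hgxD : g x ≤ D := by
        refine Finset.sum_le_sum fun k _ => ?_
        exact max_le_max (hxA k) le_rfl
      have hsle : s ≤ D / ε := by
        rw [hghom] at hgle
        rw [le_div_iff₀ hε_pos]
        have := mul_le_mul_of_nonneg_left hgle hs_nonneg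
        rw [← mul_assoc, mul_inv_cancel₀ hs_pos.ne', one_mul] at this
        calc s * ε = ε * s := mul_comm _ _
          _ ≤ g x := by nlinarith
          _ ≤ D := hgxD
      linarith

/-- If `X({i})` is nonempty for every player `i`, then `X(S)` is nonempty for every
nonempty coalition `S`; if in addition every `X({i})` is bounded, then `X(S)` is
bounded for every nonempty coalition `S`. -/
theorem designSpace_nonempty_and_bounded {K J N : Type*} [Fintype J] [Fintype K]
    [Nonempty N]
    (A : K → J → ℝ) (b : N → K → ℝ)
    (hne : ∀ i : N, (designSpace A b {i}).Nonempty) :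
    (∀ S : Finset N, S.Nonempty → (designSpace A b S).Nonempty) ∧
    ((∀ i : N, Bornology.IsBounded (designSpace A b {i})) →
      ∀ S : Finset N, S.Nonempty → Bornology.IsBounded (designSpace A b S)) := by
  classical
  choose x0 hx0 using hne
  have hx0A : ∀ i k, (∑ j, A k j * x0 i j) ≤ b i k := by
    intro i k
    simpa using (hx0 i).2 k
  constructor
  · intro S hS
    refine ⟨fun j => ∑ i ∈ S, x0 i j, fun j => Finset.sum_nonneg fun i _ => (hx0 i).1 j, ?_⟩
    intro k
    calc (∑ j, A k j * ∑ i ∈ S, x0 i j)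
        = ∑ i ∈ S, ∑ j, A k j * x0 i j := by
          simp_rw [Finset.mul_sum]; exact Finset.sum_comm
      _ ≤ ∑ i ∈ S, b i k := Finset.sum_le_sum fun i _ => hx0A i k
  · intro hbdd S hS
    obtain ⟨i₀⟩ := ‹Nonempty N›
    -- the recession cone is trivial since X({i₀}) is nonempty and bounded
    have hrec : ∀ c : J → ℝ, (∀ j, 0 ≤ c j) → (∀ k, (∑ j, A k j * c j) ≤ 0) → c = 0 := by
      intro c hc0 hcA
      by_contra hc
      obtain ⟨j, hj⟩ := Function.ne_iff.mp hc
      have hjpos : 0 < c j := lt_of_le_of_ne (hc0 j) (Ne.symm hj)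
      obtain ⟨C, hC⟩ := isBounded_iff_forall_norm_le.mp (hbdd i₀)
      set t : ℝ := (C + 1 + |C|) / c j with ht_def
      have ht_nonneg : 0 ≤ t := by
        apply div_nonneg _ hjpos.le
        have := abs_nonneg C
        have := neg_abs_le C
        linarith
      have hmem : (x0 i₀ + t • c) ∈ designSpace A b {i₀} := by
        constructor
        · intro j'
          have : 0 ≤ t * c j' := mul_nonneg ht_nonneg (hc0 j')
          simpa [Pi.add_apply, Pi.smul_apply, smul_eq_mul] using
            add_nonneg ((hx0 i₀).1 j') this
        · intro k
          have : (∑ j', A k j' * (x0 i₀ j' + t * c j'))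
              = (∑ j', A k j' * x0 i₀ j') + t * ∑ j', A k j' * c j' := by
            rw [Finset.mul_sum, ← Finset.sum_add_distrib]
            refine Finset.sum_congr rfl fun j' _ => ?_
            ring
          have h2 : t * (∑ j', A k j' * c j') ≤ 0 :=
            mul_nonpos_of_nonneg_of_nonpos ht_nonneg (hcA k)
          simp only [Pi.add_apply, Pi.smul_apply, smul_eq_mul]
          calc (∑ j', A k j' * (x0 i₀ j' + t * c j'))
              = (∑ j', A k j' * x0 i₀ j') + t * ∑ j', A k j' * c j' := this
            _ ≤ (∑ j', A k j' * x0 i₀ j') + 0 := by linarith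
            _ ≤ ∑ i ∈ ({i₀} : Finset N), b i k := by
                simpa using hx0A i₀ k
      have hnorm := hC _ hmem
      have hcomp : x0 i₀ j + t * c j ≤ ‖x0 i₀ + t • c‖ := by
        have h1 : ‖(x0 i₀ + t • c) j‖ ≤ ‖x0 i₀ + t • c‖ := norm_le_pi_norm _ j
        have h2 : x0 i₀ j + t * c j ≤ ‖(x0 i₀ + t • c) j‖ := by
          simp only [Pi.add_apply, Pi.smul_apply, smul_eq_mul]
          exact le_abs_self _
        linarith
      have htc : t * c j = C + 1 + |C| := by
        rw [ht_def, div_mul_cancel₀ _ hjpos.ne']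
      have hx0j : 0 ≤ x0 i₀ j := (hx0 i₀).1 j
      have hCabs : C ≤ |C| := le_abs_self C
      have habs0 : 0 ≤ |C| := abs_nonneg C
      linarith
    exact aux_bounded_of_rec A (fun k => ∑ i ∈ S, b i k) hrec
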